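/- Let x̄ ∈ K ∩ ℤⁿ. For every k ∈ {1,…,n}, the k-th lex-cut associated with x̄ is satisfied by every point of Q(x̄); in particular, for every x ∈ K ∩ ℤⁿ with x ⪰ x̄ one has ∑_{i=1}^k d^k_i x_i ≥ ∑_{i=1}^k d^k_i x̄_i. -/

import Mathlib

/-- Lexicographic strict order on `Fin n → ℝ` associated with the standard basis. -/
def lexLt {n : ℕ} (x y : Fin n → ℝ) : Prop :=
  ∃ i : Fin n, x i < y i ∧ ∀ j : Fin n, j < i → x j = y j

/-- `x ⪯ y` iff `x ≺ y` or `x = y`. -/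
def lexLe {n : ℕ} (x y : Fin n → ℝ) : Prop := lexLt x y ∨ x = y

/-- Membership in the cone `K = ℝⁿ₊`. -/
def inK {n : ℕ} (x : Fin n → ℝ) : Prop := ∀ i, 0 ≤ x i

/-- `x` is an integer point. -/
def isInt {n : ℕ} (x : Fin n → ℝ) : Prop := ∀ i, ∃ z : ℤ, x i = (z : ℝ)

/-- `Q(x̄) = conv {x ∈ K ∩ ℤⁿ : x ⪰ x̄}`. -/
def Q {n : ℕ} (xb : Fin n → ℝ) : Set (Fin n → ℝ) :=
  convexHull ℝ {x | inK x ∧ isInt x ∧ lexLe xb x}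

/-- The coefficients `d^k_i` of the `k`-th lex-cut associated with `x̄`:
`d^k_k = 1`, `d^k_{k-1} = x̄_k`, and `d^k_i = x̄_k ∏_{j=i+1}^{k-1} (x̄_j + 1)` for `i ≤ k-2`. -/
noncomputable def dcoef {n : ℕ} (xb : Fin n → ℝ) (k i : Fin n) : ℝ :=
  if i = k then 1 else xb k * ∏ j ∈ Finset.Ioo i k, (xb j + 1)


lemma telescope {α : Type*} [LinearOrder α] (a : α → ℝ) (s : Finset α) :
    ∑ i ∈ s, a i * ∏ j ∈ s.filter (i < ·), (a j + 1) = ∏ j ∈ s, (a j + 1) - 1 := by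
  classical
  induction s using Finset.induction_on_min with
  | empty => simp
  | insert m s hm ih =>
    have hms : m ∉ s := fun h => lt_irrefl m (hm m h)
    rw [Finset.sum_insert hms, Finset.prod_insert hms]
    have h1 : (insert m s).filter (m < ·) = s := by
      ext j
      simp only [Finset.mem_filter, Finset.mem_insert]
      constructor
      · rintro ⟨h | h, hlt⟩
        · exact absurd hlt (by simp [h])
        · exact h
      · exact fun h => ⟨Or.inr h, hm j h⟩
    have h2 : ∀ i ∈ s, (insert m s).filter (i < ·) = s.filter (i < ·) := by
      intro i hi
      ext j
      simp only [Finset.mem_filter, Finset.mem_insert]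
      constructor
      · rintro ⟨h | h, hlt⟩
        · exact absurd (h ▸ hlt) (not_lt.2 (hm i hi).le)
        · exact ⟨h, hlt⟩
      · exact fun ⟨h, hlt⟩ => ⟨Or.inr h, hlt⟩
    rw [h1, Finset.sum_congr rfl (fun i hi => by rw [h2 i hi]), ih]
    ring

lemma dnonneg {n : ℕ} (xb : Fin n → ℝ) (hK : inK xb) (k i : Fin n) :
    0 ≤ dcoef xb k i := by
  unfold dcoef
  split
  · exact zero_le_one
  · exact mul_nonneg (hK k) (Finset.prod_nonneg fun j _ => by linarith [hK j])

lemma keyid {n : ℕ} (xb : Fin n → ℝ) (k i₀ : Fin n) (h : i₀ < k) :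
    ∑ i ∈ Finset.Ioc i₀ k, dcoef xb k i * xb i = dcoef xb k i₀ := by
  classical
  rw [← Finset.Ioo_insert_right h, Finset.sum_insert Finset.right_notMem_Ioo]
  have hkk : dcoef xb k k = 1 := by simp [dcoef]
  have hstep : ∀ i ∈ Finset.Ioo i₀ k, dcoef xb k i * xb i =
      xb k * (xb i * ∏ j ∈ (Finset.Ioo i₀ k).filter (i < ·), (xb j + 1)) := by
    intro i hi
    have hik : i < k := (Finset.mem_Ioo.1 hi).2
    have hne : i ≠ k := hik.ne
    have hfil : (Finset.Ioo i₀ k).filter (i < ·) = Finset.Ioo i k := by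
      ext j
      simp only [Finset.mem_filter, Finset.mem_Ioo]
      constructor
      · rintro ⟨⟨_, hjk⟩, hij⟩; exact ⟨hij, hjk⟩
      · rintro ⟨hij, hjk⟩; exact ⟨⟨lt_trans (Finset.mem_Ioo.1 hi).1 hij, hjk⟩, hij⟩
    rw [hfil]
    simp [dcoef, hne]
    ring
  rw [Finset.sum_congr rfl hstep, ← Finset.mul_sum, telescope xb (Finset.Ioo i₀ k)]
  have hne : i₀ ≠ k := h.ne
  simp [dcoef, hne, hkk]
  ring

lemma main_int {n : ℕ} (xb : Fin n → ℝ) (hK : inK xb) (hI : isInt xb) (k : Fin n)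
    (x : Fin n → ℝ) (hxK : inK x) (hxI : isInt x) (hle : lexLe xb x) :
    ∑ i ∈ Finset.Iic k, dcoef xb k i * x i ≥ ∑ i ∈ Finset.Iic k, dcoef xb k i * xb i := by
  classical
  rcases hle with ⟨i₀, hlt, heq⟩ | rfl
  · -- x ≻ xb
    by_cases hik : k < i₀
    · have : ∀ i ∈ Finset.Iic k, dcoef xb k i * x i = dcoef xb k i * xb i := by
        intro i hi
        rw [heq i (lt_of_le_of_lt (Finset.mem_Iic.1 hi) hik)]
      rw [Finset.sum_congr rfl this]
    · push_neg at hik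
      -- i₀ ≤ k
      have hx1 : xb i₀ + 1 ≤ x i₀ := by
        obtain ⟨z, hz⟩ := hI i₀
        obtain ⟨w, hw⟩ := hxI i₀
        rw [hz, hw] at hlt ⊢
        exact_mod_cast Int.add_one_le_of_lt (by exact_mod_cast hlt)
      have hsplit : Finset.Iic k = Finset.Iic i₀ ∪ Finset.Ioc i₀ k := by
        ext a
        simp only [Finset.mem_Iic, Finset.mem_union, Finset.mem_Ioc, Fin.le_def, Fin.lt_def] at *
        omega
      have hdisj : Disjoint (Finset.Iic i₀) (Finset.Ioc i₀ k) := by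
        rw [Finset.disjoint_left]
        intro a ha hb
        exact absurd (Finset.mem_Iic.1 ha) (not_le.2 (Finset.mem_Ioc.1 hb).1)
      have hIic : Finset.Iic i₀ = insert i₀ (Finset.Iio i₀) := (Finset.Iio_insert i₀).symm
      have hrw : ∀ f : Fin n → ℝ, ∑ i ∈ Finset.Iic k, dcoef xb k i * f i =
          dcoef xb k i₀ * f i₀ + ∑ i ∈ Finset.Iio i₀, dcoef xb k i * f i
            + ∑ i ∈ Finset.Ioc i₀ k, dcoef xb k i * f i := by
        intro f
        rw [hsplit, Finset.sum_union hdisj, hIic,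
          Finset.sum_insert (by simp)]
      rw [hrw x, hrw xb]
      have heq' : ∑ i ∈ Finset.Iio i₀, dcoef xb k i * x i
          = ∑ i ∈ Finset.Iio i₀, dcoef xb k i * xb i := by
        apply Finset.sum_congr rfl
        intro i hi
        rw [heq i (Finset.mem_Iio.1 hi)]
      rw [heq']
      rcases lt_or_eq_of_le hik with hik' | rfl
      · -- i₀ < k
        rw [keyid xb k i₀ hik']
        have h1 : dcoef xb k i₀ * x i₀ ≥ dcoef xb k i₀ * xb i₀ + dcoef xb k i₀ := by
          have := dnonneg xb hK k i₀
          nlinarith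
        have h2 : (0:ℝ) ≤ ∑ i ∈ Finset.Ioc i₀ k, dcoef xb k i * x i :=
          Finset.sum_nonneg fun i _ => mul_nonneg (dnonneg xb hK k i) (hxK i)
        linarith
      · -- i₀ = k
        simp only [Finset.Ioc_self, Finset.sum_empty]
        have hd : dcoef xb i₀ i₀ = 1 := by simp [dcoef]
        rw [hd]
        linarith
  · exact le_refl _

/-- For `x̄ ∈ K ∩ ℤⁿ` and every `k`, the `k`-th lex-cut associated with `x̄` is satisfied
by every point of `Q(x̄)`; in particular by every `x ∈ K ∩ ℤⁿ` with `x ⪰ x̄`. -/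
theorem stmt5 {n : ℕ} (xb : Fin n → ℝ) (hK : inK xb) (hI : isInt xb) (k : Fin n) :
    (∀ x ∈ Q xb,
      ∑ i ∈ Finset.Iic k, dcoef xb k i * x i ≥ ∑ i ∈ Finset.Iic k, dcoef xb k i * xb i) ∧
    (∀ x : Fin n → ℝ, inK x → isInt x → lexLe xb x →
      ∑ i ∈ Finset.Iic k, dcoef xb k i * x i ≥ ∑ i ∈ Finset.Iic k, dcoef xb k i * xb i) := by
  constructor
  · intro x hx
    have hlin : IsLinearMap ℝ (fun y : Fin n → ℝ => ∑ i ∈ Finset.Iic k, dcoef xb k i * y i) := by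
      constructor
      · intro y z
        simp [mul_add, Finset.sum_add_distrib]
      · intro c y
        simp only [Pi.smul_apply, smul_eq_mul, Finset.mul_sum]
        exact Finset.sum_congr rfl fun i _ => by ring
    have hconv : Convex ℝ {y : Fin n → ℝ |
        ∑ i ∈ Finset.Iic k, dcoef xb k i * xb i ≤ ∑ i ∈ Finset.Iic k, dcoef xb k i * y i} :=
      convex_halfSpace_ge hlin _
    have hsub : {y : Fin n → ℝ | inK y ∧ isInt y ∧ lexLe xb y} ⊆ {y : Fin n → ℝ |
        ∑ i ∈ Finset.Iic k, dcoef xb k i * xb i ≤ ∑ i ∈ Finset.Iic k, dcoef xb k i * y i} := by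
      rintro y ⟨h1, h2, h3⟩
      exact main_int xb hK hI k y h1 h2 h3
    exact convexHull_min hsub hconv hx
  · exact fun x h1 h2 h3 => main_int xb hK hI k x h1 h2 h3
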